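/- Let p be a prime divisor of n and let t = n/p. Then rb(Z_n,S) ≤ rb(Z_p,S) + rb(Z_t,S) − 2. -/

import Mathlib

/-- `c` admits a rainbow solution to the Sidon equation `x₁ + x₂ = x₃ + x₄`:
a solution whose four colors are pairwise distinct. -/
def HasRainbowSidon {n : ℕ} {α : Type*} (c : ZMod n → α) : Prop :=
  ∃ x₁ x₂ x₃ x₄ : ZMod n, x₁ + x₂ = x₃ + x₄ ∧
    c x₁ ≠ c x₂ ∧ c x₁ ≠ c x₃ ∧ c x₁ ≠ c x₄ ∧
    c x₂ ≠ c x₃ ∧ c x₂ ≠ c x₄ ∧ c x₃ ≠ c x₄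

/-- The rainbow number `rb(ℤ_n, S)` of `ℤ_n` for the Sidon equation: the least `r > 0`
such that every exact (surjective) `r`-coloring of `ℤ_n` admits a rainbow Sidon solution.
(When no such `r` exists, `r = n + 1` belongs to the set vacuously, matching the
convention `rb(ℤ_n, S) = n + 1`.) -/
noncomputable def rbSidon (n : ℕ) : ℕ :=
  sInf {r : ℕ | 0 < r ∧ ∀ c : ZMod n → Fin r, Function.Surjective c → HasRainbowSidon c}

private lemma rbSidon_mem (m : ℕ) (hm : 0 < m) :
    0 < rbSidon m ∧
      ∀ c : ZMod m → Fin (rbSidon m), Function.Surjective c → HasRainbowSidon c := by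
  haveI : NeZero m := ⟨hm.ne'⟩
  have hne : {r : ℕ | 0 < r ∧ ∀ c : ZMod m → Fin r, Function.Surjective c →
      HasRainbowSidon c}.Nonempty := by
    refine ⟨m + 1, Nat.succ_pos m, fun c hc => ?_⟩
    have h := Fintype.card_le_of_surjective c hc
    rw [ZMod.card, Fintype.card_fin] at h
    exact absurd h (by omega)
  exact Nat.sInf_mem hne

private lemma two_le_rbSidon (m : ℕ) (hm : 0 < m) : 2 ≤ rbSidon m := by
  obtain ⟨h1, hall⟩ := rbSidon_mem m hm
  by_contra h
  have hr1 : rbSidon m = 1 := by omega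
  have hsurj : Function.Surjective (fun _ : ZMod m => (⟨0, h1⟩ : Fin (rbSidon m))) := by
    intro y
    refine ⟨0, ?_⟩
    apply Fin.ext
    have h2 := y.isLt
    show (0 : ℕ) = y.val
    omega
  obtain ⟨x1, x2, x3, x4, _, h12, _⟩ := hall _ hsurj
  exact h12 rfl

/-- Merging lemma: if a coloring attains at least `rbSidon m` distinct values,
it has a rainbow Sidon solution. -/
private lemma rainbow_of_many_colors {m : ℕ} (hm : 0 < m) {α : Type*}
    (g : ZMod m → α) (s : Finset α)
    (hatt : ∀ a ∈ s, ∃ x, g x = a) (hcard : rbSidon m ≤ s.card) :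
    HasRainbowSidon g := by
  classical
  obtain ⟨hpos, hall⟩ := rbSidon_mem m hm
  obtain ⟨s', hsub, hcard'⟩ := Finset.exists_subset_card_eq hcard
  set R := rbSidon m with hR
  have hv : ∃ v : Fin R → α, Function.Injective v ∧ ∀ j, v j ∈ s' := by
    refine ⟨fun j => ((Finset.equivFinOfCardEq hcard').symm j : α), ?_,
      fun j => ((Finset.equivFinOfCardEq hcard').symm j).2⟩
    intro j j' h
    exact (Finset.equivFinOfCardEq hcard').symm.injective (Subtype.coe_injective h)
  obtain ⟨v, hvinj, hvmem⟩ := hv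
  set f : α → Fin R := fun a => if h : ∃ j, v j = a then h.choose else ⟨0, hpos⟩ with hf
  have hsurj : Function.Surjective (f ∘ g) := by
    intro j
    obtain ⟨x, hx⟩ := hatt (v j) (hsub (hvmem j))
    refine ⟨x, ?_⟩
    have hex : ∃ j', v j' = v j := ⟨j, rfl⟩
    simp only [Function.comp_apply, hx, hf]
    rw [dif_pos hex]
    exact hvinj hex.choose_spec
  obtain ⟨x1, x2, x3, x4, hsum, h12, h13, h14, h23, h24, h34⟩ := hall (f ∘ g) hsurj
  exact ⟨x1, x2, x3, x4, hsum,
    fun h => h12 (by simp only [Function.comp_apply, h]),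
    fun h => h13 (by simp only [Function.comp_apply, h]),
    fun h => h14 (by simp only [Function.comp_apply, h]),
    fun h => h23 (by simp only [Function.comp_apply, h]),
    fun h => h24 (by simp only [Function.comp_apply, h]),
    fun h => h34 (by simp only [Function.comp_apply, h])⟩

theorem rb_sidon_subadditive (n p t : ℕ) (hn : 0 < n) (hp : p.Prime) (hdvd : p ∣ n)
    (ht : t = n / p) :
    rbSidon n ≤ rbSidon p + rbSidon t - 2 := by
  classical
  haveI : NeZero n := ⟨hn.ne'⟩
  have hp0 : 0 < p := hp.pos
  have htp : p * t = n := by rw [ht]; exact Nat.mul_div_cancel' hdvd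
  have ht0 : 0 < t := by
    rcases Nat.eq_zero_or_pos t with h | h
    · rw [h, Nat.mul_zero] at htp; omega
    · exact h
  haveI : NeZero t := ⟨ht0.ne'⟩
  haveI : NeZero p := ⟨hp0.ne'⟩
  have hR1 : 2 ≤ rbSidon p := two_le_rbSidon p hp0
  have hR2 : 2 ≤ rbSidon t := two_le_rbSidon t ht0
  set R1 := rbSidon p with hR1d
  set R2 := rbSidon t with hR2d
  set r := R1 + R2 - 2 with hrdef
  have hr0 : 0 < r := by omega
  apply Nat.sInf_le
  refine ⟨hr0, fun c hc => ?_⟩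
  by_contra hrb
  exfalso
  -- quotient map onto `ZMod p`
  set π : ZMod n → ZMod p := fun x => (ZMod.castHom hdvd (ZMod p)) x with hπdef
  have hπadd : ∀ x y : ZMod n, π (x + y) = π x + π y := fun x y => map_add _ x y
  have hπsub : ∀ x y : ZMod n, π (x - y) = π x - π y := fun x y => map_sub _ x y
  have hπval : ∀ z : ZMod n, π z = ((z.val : ℕ) : ZMod p) := fun z =>
    (ZMod.castHom_apply z).trans (ZMod.natCast_val z).symm
  -- section of the subgroup of multiples of p
  set e : ZMod t → ZMod n := fun a => (p : ZMod n) * ((a.val : ℕ) : ZMod n) with hedef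
  have hpt0 : (p : ZMod n) * (t : ZMod n) = 0 := by
    have h : ((p * t : ℕ) : ZMod n) = 0 := by rw [htp]; exact ZMod.natCast_self n
    push_cast at h
    exact h
  have hkey : ∀ x : ℕ, (p : ZMod n) * ((x % t : ℕ) : ZMod n) = (p : ZMod n) * (x : ZMod n) := by
    intro x
    have h1 : (x : ZMod n) = ((x % t : ℕ) : ZMod n) + (t : ZMod n) * ((x / t : ℕ) : ZMod n) := by
      conv_lhs => rw [← Nat.mod_add_div x t]
      push_cast
      ring
    rw [h1, mul_add, ← mul_assoc, hpt0, zero_mul, add_zero]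
  have headd : ∀ a b : ZMod t, e (a + b) = e a + e b := by
    intro a b
    show (p : ZMod n) * (((a + b).val : ℕ) : ZMod n) = _
    rw [ZMod.val_add, hkey, Nat.cast_add, mul_add]
  have hπe : ∀ a : ZMod t, π (e a) = 0 := by
    intro a
    show (ZMod.castHom hdvd (ZMod p)) ((p : ZMod n) * _) = 0
    rw [map_mul, map_natCast, ZMod.natCast_self, zero_mul]
  have hcover : ∀ x y : ZMod n, π x = π y → ∃ a : ZMod t, y = x + e a := by
    intro x y h
    set z := y - x with hz
    have hz0 : π z = 0 := by rw [hz, hπsub, h, sub_self]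
    have hvz : ((z.val : ℕ) : ZMod p) = 0 := by rw [← hπval z]; exact hz0
    have hdvdz : p ∣ z.val := (ZMod.natCast_eq_zero_iff _ _).mp hvz
    refine ⟨((z.val / p : ℕ) : ZMod t), ?_⟩
    have hvlt : z.val < n := ZMod.val_lt z
    have hlt : z.val / p < t := Nat.div_lt_of_lt_mul (by rw [htp]; exact hvlt)
    have hval : ((z.val / p : ℕ) : ZMod t).val = z.val / p := ZMod.val_cast_of_lt hlt
    have he : e ((z.val / p : ℕ) : ZMod t) = ((z.val : ℕ) : ZMod n) := by
      show (p : ZMod n) * _ = _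
      rw [hval, ← Nat.cast_mul, Nat.mul_div_cancel' hdvdz]
    rw [he, ZMod.natCast_zmod_val]
    rw [hz]
    ring
  -- color sets of cosets
  set A : ZMod p → Finset (Fin r) :=
    fun i => (Finset.univ.filter (fun x => π x = i)).image c with hAdef
  have hmemA : ∀ x : ZMod n, c x ∈ A (π x) := by
    intro x
    exact Finset.mem_image_of_mem c (Finset.mem_filter.mpr ⟨Finset.mem_univ x, rfl⟩)
  have hA_elem : ∀ i b, b ∈ A i → ∃ x, π x = i ∧ c x = b := by
    intro i b hb
    obtain ⟨x, hx, hcx⟩ := Finset.mem_image.mp hb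
    exact ⟨x, (Finset.mem_filter.mp hx).2, hcx⟩
  -- Step 1: every coset has fewer than R2 colors
  have hcoset : ∀ i : ZMod p, (A i).card < R2 := by
    intro i
    by_contra hcard
    push_neg at hcard
    have hApos : 0 < (A i).card := by omega
    obtain ⟨b0, hb0⟩ := Finset.card_pos.mp hApos
    obtain ⟨x0, hπx0, _⟩ := hA_elem i b0 hb0
    set g : ZMod t → Fin r := fun a => c (x0 + e a) with hg
    have hatt : ∀ b ∈ A i, ∃ a, g a = b := by
      intro b hb
      obtain ⟨y, hy, hyc⟩ := hA_elem i b hb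
      obtain ⟨a, ha⟩ := hcover x0 y (by rw [hπx0, hy])
      exact ⟨a, by rw [hg]; simp only [← ha]; exact hyc⟩
    obtain ⟨a1, a2, a3, a4, hsum, h12, h13, h14, h23, h24, h34⟩ :=
      rainbow_of_many_colors ht0 g (A i) hatt hcard
    refine hrb ⟨x0 + e a1, x0 + e a2, x0 + e a3, x0 + e a4, ?_, h12, h13, h14, h23, h24, h34⟩
    have he12 : e a1 + e a2 = e a3 + e a4 := by rw [← headd, ← headd, hsum]
    rw [add_add_add_comm, add_add_add_comm x0 (e a3)]
    rw [he12]
  -- the key "forbidden pattern" lemma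
  have STAR : ∀ u v : ZMod n, π u = π v → c u ≠ c v →
      ∀ x : ZMod n, (∀ w, π w = π x → c w ≠ c u ∧ c w ≠ c v) →
      c (x + (u - v)) = c x := by
    intro u v hπuv hcuv x havoid
    by_contra hne
    have hπx4 : π (x + (u - v)) = π x := by
      rw [hπadd, hπsub, hπuv, sub_self, add_zero]
    have h1 := havoid x rfl
    have h4 := havoid _ hπx4
    exact hrb ⟨u, x, v, x + (u - v), by ring, h1.1.symm, hcuv, h4.1.symm, h1.2,
      Ne.symm hne, h4.2.symm⟩
  -- a coset with the maximal number of colors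
  obtain ⟨k, _, hkmax⟩ := Finset.exists_max_image Finset.univ (fun i => (A i).card)
    ⟨0, Finset.mem_univ 0⟩
  by_cases hdich : ∃ u v : ZMod n, π u = π v ∧ c u ≠ c v ∧ c u ∉ A k ∧ c v ∉ A k
  · -- Case: two colors outside `A k` share a coset; derive a contradiction via periodicity
    obtain ⟨u, v, hπuv, hcuv, hcuk, hcvk⟩ := hdich
    set d := u - v with hd
    have hπd : π d = 0 := by rw [hd, hπsub, hπuv, sub_self]
    have havK : ∀ w, π w = k → c w ≠ c u ∧ c w ≠ c v := by
      intro w hw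
      constructor
      · intro h; exact hcuk (h ▸ (hw ▸ hmemA w))
      · intro h; exact hcvk (h ▸ (hw ▸ hmemA w))
    -- cardinality: at least two colors of `A k` are missing from `A (π u)`
    have hsub2 : ({c u, c v} : Finset (Fin r)) ⊆ A (π u) \ A k := by
      intro b hb
      rcases Finset.mem_insert.mp hb with h | h
      · subst h; exact Finset.mem_sdiff.mpr ⟨hmemA u, hcuk⟩
      · rw [Finset.mem_singleton] at h; subst h
        exact Finset.mem_sdiff.mpr ⟨hπuv ▸ hmemA v, hcvk⟩
    have h2le : 2 ≤ (A (π u) \ A k).card := by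
      have hp2 : ({c u, c v} : Finset (Fin r)).card = 2 := Finset.card_pair hcuv
      rw [← hp2]
      exact Finset.card_le_card hsub2
    have h2le' : 1 < (A k \ A (π u)).card := by
      have hc1 := Finset.card_sdiff_add_card_inter (A k) (A (π u))
      have hc2 := Finset.card_sdiff_add_card_inter (A (π u)) (A k)
      have hmax := hkmax (π u) (Finset.mem_univ _)
      rw [Finset.inter_comm] at hc2
      omega
    obtain ⟨α, hα, β, hβ, hαβ⟩ := Finset.one_lt_card.mp h2le'
    obtain ⟨x, hπx, hcx⟩ := hA_elem _ _ (Finset.mem_sdiff.mp hα).1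
    obtain ⟨y, hπy, hcy⟩ := hA_elem _ _ (Finset.mem_sdiff.mp hβ).1
    have hxnot : c x ∉ A (π u) := by rw [hcx]; exact (Finset.mem_sdiff.mp hα).2
    have hynot : c y ∉ A (π u) := by rw [hcy]; exact (Finset.mem_sdiff.mp hβ).2
    have hcxy : c x ≠ c y := by rw [hcx, hcy]; exact hαβ
    -- K* is d-periodic
    have hKd : c (x + d) = c x :=
      STAR u v hπuv hcuv x (fun w hw => havK w (hw.trans hπx))
    have havU : ∀ w, π w = π u → c w ≠ c x ∧ c w ≠ c y := by
      intro w hw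
      constructor
      · intro h; exact hxnot (h ▸ (hw ▸ hmemA w))
      · intro h; exact hynot (h ▸ (hw ▸ hmemA w))
    have hstep1 : ∀ z, π z = π u → c (z + (x - y)) = c z := by
      intro z hz
      exact STAR x y (hπx.trans hπy.symm) hcxy z (fun w hw => havU w (hw.trans hz))
    have hπxd : π (x + d) = π y := by rw [hπadd, hπd, add_zero, hπx, hπy]
    have hstep2 : ∀ z, π z = π u → c (z + (x + d - y)) = c z := by
      intro z hz
      refine STAR (x + d) y hπxd (by rw [hKd]; exact hcxy) z (fun w hw => ?_)
      have h := havU w (hw.trans hz)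
      exact ⟨by rw [hKd]; exact h.1, h.2⟩
    have hπvd : π (v + d) = π u := by rw [hπadd, hπd, add_zero, hπuv]
    have e1 := hstep2 v hπuv.symm
    have e2 := hstep1 (v + d) hπvd
    rw [show v + (x + d - y) = v + d + (x - y) by ring] at e1
    have h5 : c (v + d) = c v := e2.symm.trans e1
    have hu : u = v + d := by rw [hd]; ring
    exact hcuv (by rw [hu]; exact h5)
  · -- Case: each coset has at most one color outside `A k`
    push_neg at hdich
    have huniq : ∀ i, ∀ b1 ∈ A i, ∀ b2 ∈ A i, b1 ∉ A k → b2 ∉ A k → b1 = b2 := by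
      intro i b1 hb1 b2 hb2 hn1 hn2
      by_contra hne
      obtain ⟨u, hπu, hcu⟩ := hA_elem i b1 hb1
      obtain ⟨v, hπv, hcv⟩ := hA_elem i b2 hb2
      have := hdich u v (hπu.trans hπv.symm) (by rw [hcu, hcv]; exact hne)
        (by rw [hcu]; exact hn1)
      rw [hcv] at this
      exact hn2 this
    set cq : ZMod p → Option (Fin r) :=
      fun i => if h : ∃ b, b ∈ A i ∧ b ∉ A k then some h.choose else none with hcq
    have hcq_some : ∀ i b', cq i = some b' → b' ∈ A i ∧ b' ∉ A k := by
      intro i b' h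
      rw [hcq] at h
      simp only at h
      split at h
      · rename_i hex
        have hspec := hex.choose_spec
        rw [Option.some_inj] at h
        rw [← h]
        exact hspec
      · exact absurd h (by simp)
    have hcq_none : ∀ i, cq i = none → ∀ b ∈ A i, b ∈ A k := by
      intro i h b hb
      rw [hcq] at h
      simp only at h
      split at h
      · exact absurd h (by simp)
      · rename_i hex
        push_neg at hex
        exact hex b hb
    -- the quotient coloring attains many values
    set B : Finset (Fin r) := Finset.univ \ A k with hB
    set s : Finset (Option (Fin r)) := insert none (B.image some) with hs
    have hatt : ∀ o ∈ s, ∃ i, cq i = o := by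
      intro o ho
      rcases Finset.mem_insert.mp ho with h | h
      · subst h
        refine ⟨k, ?_⟩
        rw [hcq]
        simp only
        rw [dif_neg]
        rintro ⟨b, hb1, hb2⟩
        exact hb2 hb1
      · obtain ⟨b, hbB, hbo⟩ := Finset.mem_image.mp h
        have hbk : b ∉ A k := (Finset.mem_sdiff.mp hbB).2
        obtain ⟨x, hx⟩ := hc b
        have hbA : b ∈ A (π x) := hx ▸ hmemA x
        refine ⟨π x, ?_⟩
        have hex : ∃ b', b' ∈ A (π x) ∧ b' ∉ A k := ⟨b, hbA, hbk⟩
        rw [hcq]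
        simp only
        rw [dif_pos hex, ← hbo, Option.some_inj]
        exact huniq (π x) hex.choose hex.choose_spec.1 b hbA hex.choose_spec.2 hbk
    have hscard : R1 ≤ s.card := by
      have h1 : (B.image some).card = B.card :=
        Finset.card_image_of_injective B (Option.some_injective _)
      have h2 : none ∉ B.image some := by
        intro h
        obtain ⟨b, _, hb⟩ := Finset.mem_image.mp h
        exact Option.some_ne_none b hb
      have h3 : s.card = B.card + 1 := by
        rw [hs, Finset.card_insert_of_notMem h2, h1]
      have h4 : B.card = r - (A k).card := by
        rw [hB, Finset.card_sdiff_of_subset (Finset.subset_univ _), Finset.card_univ, Fintype.card_fin]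
      have h5 := hcoset k
      omega
    have hrainbow : HasRainbowSidon cq := rainbow_of_many_colors hp0 cq s hatt hscard
    -- lifting a rainbow solution of the quotient coloring: contradiction
    have hnotin : ∀ (i4 : ZMod p) (b : Fin r), b ∉ A k → cq i4 ≠ some b → b ∉ A i4 := by
      intro i4 b hbk hne hmem
      cases hcq4 : cq i4 with
      | none => exact hbk (hcq_none i4 hcq4 b hmem)
      | some b4 =>
          have h4 := hcq_some i4 b4 hcq4
          have : b = b4 := huniq i4 b hmem b4 h4.1 hbk h4.2
          rw [this] at hne
          exact hne hcq4
    have CORE : ∀ i1 i2 i3 i4 : ZMod p, i1 + i2 = i3 + i4 →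
        cq i1 ≠ cq i2 → cq i1 ≠ cq i3 → cq i1 ≠ cq i4 →
        cq i2 ≠ cq i3 → cq i2 ≠ cq i4 → cq i3 ≠ cq i4 →
        cq i1 ≠ none → cq i2 ≠ none → cq i3 ≠ none → False := by
      intro i1 i2 i3 i4 hsum h12 h13 h14 h23 h24 h34 h1n h2n h3n
      obtain ⟨b1, hb1⟩ := Option.ne_none_iff_exists'.mp h1n
      obtain ⟨b2, hb2⟩ := Option.ne_none_iff_exists'.mp h2n
      obtain ⟨b3, hb3⟩ := Option.ne_none_iff_exists'.mp h3n
      have hA1 := hcq_some i1 b1 hb1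
      have hA2 := hcq_some i2 b2 hb2
      have hA3 := hcq_some i3 b3 hb3
      obtain ⟨x1, hπ1, hc1⟩ := hA_elem i1 b1 hA1.1
      obtain ⟨x2, hπ2, hc2⟩ := hA_elem i2 b2 hA2.1
      obtain ⟨x3, hπ3, hc3⟩ := hA_elem i3 b3 hA3.1
      have hb12 : b1 ≠ b2 := fun h => h12 (by rw [hb1, hb2, h])
      have hb13 : b1 ≠ b3 := fun h => h13 (by rw [hb1, hb3, h])
      have hb23 : b2 ≠ b3 := fun h => h23 (by rw [hb2, hb3, h])
      have hn1 : b1 ∉ A i4 := hnotin i4 b1 hA1.2 (fun h => h14 (hb1.trans h.symm))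
      have hn2 : b2 ∉ A i4 := hnotin i4 b2 hA2.2 (fun h => h24 (hb2.trans h.symm))
      have hn3 : b3 ∉ A i4 := hnotin i4 b3 hA3.2 (fun h => h34 (hb3.trans h.symm))
      set x4 := x1 + x2 - x3 with hx4
      have hπ4 : π x4 = i4 := by
        rw [hx4, hπsub, hπadd, hπ1, hπ2, hπ3]
        linear_combination hsum
      have hc4 : c x4 ∈ A i4 := hπ4 ▸ hmemA x4
      refine hrb ⟨x1, x2, x3, x4, by rw [hx4]; ring,
        by rw [hc1, hc2]; exact hb12,
        by rw [hc1, hc3]; exact hb13,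
        fun h => hn1 (by rw [← hc1, h]; exact hc4),
        by rw [hc2, hc3]; exact hb23,
        fun h => hn2 (by rw [← hc2, h]; exact hc4),
        fun h => hn3 (by rw [← hc3, h]; exact hc4)⟩
    obtain ⟨i1, i2, i3, i4, hsum, h12, h13, h14, h23, h24, h34⟩ := hrainbow
    by_cases h1n : cq i1 = none
    · exact CORE i3 i4 i2 i1 (by rw [← hsum]; exact (add_comm i2 i1).symm)
        h34 h23.symm h13.symm h24.symm h14.symm h12.symm
        (fun h => h13 (h1n.trans h.symm)) (fun h => h14 (h1n.trans h.symm))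
        (fun h => h12 (h1n.trans h.symm))
    · by_cases h2n : cq i2 = none
      · exact CORE i3 i4 i1 i2 (by rw [← hsum])
          h34 h13.symm h23.symm h14.symm h24.symm h12
          (fun h => h23 (h2n.trans h.symm)) (fun h => h24 (h2n.trans h.symm)) h1n
      · by_cases h3n : cq i3 = none
        · exact CORE i1 i2 i4 i3 (by rw [hsum]; exact add_comm i3 i4)
            h12 h14 h13 h24 h23 h34.symm h1n h2n
            (fun h => h34 (h3n.trans h.symm))
        · exact CORE i1 i2 i3 i4 hsum h12 h13 h14 h23 h24 h34 h1n h2n h3n
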